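/- Optimality of the lossy lower bound: for every n ≥ 1, there exists a lossy execution of the broadcast protocol P_n covering {☺} whose size is exactly n + 1 nodes (with the static communication topology in which one designated node is connected to each of the other n nodes). -/

import Mathlib

/-- A broadcast protocol over finite state set `Q` and finite message alphabet `M`.
`I` is the set of initial states, `br q m q'` means `(q, !!m, q') ∈ Δ` (a broadcast
transition) and `rcv q m q'` means `(q, ??m, q') ∈ Δ` (a reception transition).
The protocol is complete for receptions. -/
structure BroadcastProtocol (Q M : Type) [Fintype Q] [DecidableEq Q] [Fintype M] where
  I : Finset Q
  br : Q → M → Q → Prop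
  rcv : Q → M → Q → Prop
  complete : ∀ q m, ∃ q', rcv q m q'

section Execs
variable {Q M : Type} [Fintype Q] [DecidableEq Q] [Fintype M]

/-- A lossy execution of length `r` over the finite node type `ν`: the communication
topology `E` is fixed throughout, and in the `i`-th step node `sender i` broadcasts
message `msg i`, which is lost (reaching no node) iff `lost i = true`. -/
structure LExec (P : BroadcastProtocol Q M) (ν : Type) [Fintype ν] [DecidableEq ν]
    (r : ℕ) where
  lab : Fin (r + 1) → ν → Q
  E : ν → ν → Prop
  E_symm : Symmetric E
  E_irrefl : Irreflexive E
  sender : Fin r → ν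
  msg : Fin r → M
  lost : Fin r → Bool
  init : ∀ v, lab 0 v ∈ P.I
  step_br : ∀ i : Fin r, P.br (lab i.castSucc (sender i)) (msg i) (lab i.succ (sender i))
  step_lost : ∀ i : Fin r, lost i = true → ∀ v, v ≠ sender i →
    lab i.succ v = lab i.castSucc v
  step_real : ∀ i : Fin r, lost i = false → ∀ v, v ≠ sender i →
    (E (sender i) v → P.rcv (lab i.castSucc v) (msg i) (lab i.succ v)) ∧
    (¬ E (sender i) v → lab i.succ v = lab i.castSucc v)

namespace LExec

variable {P : BroadcastProtocol Q M} {ν : Type} [Fintype ν] [DecidableEq ν] {r : ℕ}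

/-- Labelling of the last configuration. -/
def lastLab (ρ : LExec P ν r) : ν → Q := ρ.lab (Fin.last r)

/-- The execution covers `F` if a node of the last configuration is labelled in `F`. -/
def Covers (ρ : LExec P ν r) (F : Set Q) : Prop := ∃ v, ρ.lastLab v ∈ F

/-- The active length of node `v`: the number of broadcasts (lost or not) of `v`. -/
def activeLen (ρ : LExec P ν r) (v : ν) : ℕ :=
  (Finset.univ.filter fun i : Fin r => ρ.sender i = v).card

/-- The real active length of node `v`: the number of non-lost broadcasts of `v`. -/
def realActiveLen (ρ : LExec P ν r) (v : ν) : ℕ :=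
  (Finset.univ.filter fun i : Fin r => ρ.sender i = v ∧ ρ.lost i = false).card

end LExec

end Execs
/- ## The protocol P_n (succinctness) -/

abbrev PnQ (n : ℕ) := Fin (2 * n + 1) ⊕ (Fin n ⊕ Unit)
abbrev PnM (n : ℕ) := Option (Fin n)

def PnBr (n : ℕ) : PnQ n → PnM n → PnQ n → Prop
  | .inl k, none, q' => (k : ℕ) = 0 ∧ q' = .inl k
  | .inl k, some i, q' =>
      (k : ℕ) = 2 * (i : ℕ) + 1 ∧ ∃ h : (k : ℕ) + 1 < 2 * n + 1, q' = .inl ⟨(k : ℕ) + 1, h⟩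
  | _, _, _ => False

def PnRcv (n : ℕ) : PnQ n → PnM n → PnQ n → Prop
  | .inl k, none, q' =>
      ((k : ℕ) % 2 = 0 ∧ ∃ _h : (k : ℕ) < 2 * n, q' = Sum.inl ⟨(k : ℕ) + 1, by omega⟩)
      ∨ (¬ ((k : ℕ) % 2 = 0 ∧ (k : ℕ) < 2 * n) ∧ q' = .inl k)
  | .inl k, some i, q' =>
      ((k : ℕ) = 0 ∧ q' = .inr (.inr ()))
      ∨ ((k : ℕ) = 0 ∧ (i : ℕ) = 0 ∧ q' = .inr (.inl ⟨0, Fin.pos i⟩))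
      ∨ ((k : ℕ) ≠ 0 ∧ q' = .inl k)
  | .inr (.inl j), none, q' => q' = .inr (.inl j)
  | .inr (.inl j), some i, q' =>
      ((i : ℕ) = (j : ℕ) + 1 ∧ ∃ h : (j : ℕ) + 1 < n, q' = .inr (.inl ⟨(j : ℕ) + 1, h⟩))
      ∨ ((i : ℕ) ≠ (j : ℕ) + 1 ∧ q' = .inr (.inl j))
  | .inr (.inr _), _, q' => q' = .inr (.inr ())

def PnProt (n : ℕ) : BroadcastProtocol (PnQ n) (PnM n) where
  I := {Sum.inl (0 : Fin (2 * n + 1))}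
  br := PnBr n
  rcv := PnRcv n
  complete := by
    rintro (k | j | u) (_ | i)
    · by_cases h : (k : ℕ) % 2 = 0 ∧ (k : ℕ) < 2 * n
      · exact ⟨Sum.inl ⟨(k : ℕ) + 1, by omega⟩, Or.inl ⟨h.1, h.2, rfl⟩⟩
      · exact ⟨Sum.inl k, Or.inr ⟨h, rfl⟩⟩
    · by_cases h : (k : ℕ) = 0
      · exact ⟨Sum.inr (Sum.inr ()), Or.inl ⟨h, rfl⟩⟩
      · exact ⟨Sum.inl k, Or.inr (Or.inr ⟨h, rfl⟩)⟩
    · exact ⟨Sum.inr (Sum.inl j), rfl⟩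
    · by_cases h : (i : ℕ) = (j : ℕ) + 1
      · exact ⟨Sum.inr (Sum.inl ⟨(j : ℕ) + 1, by have := i.isLt; omega⟩),
          Or.inl ⟨h, by have := i.isLt; omega, rfl⟩⟩
      · exact ⟨Sum.inr (Sum.inl j), Or.inr ⟨h, rfl⟩⟩
    · exact ⟨Sum.inr (Sum.inr ()), rfl⟩
    · exact ⟨Sum.inr (Sum.inr ()), rfl⟩

def PnSmiley (n : ℕ) (hn : 1 ≤ n) : PnQ n := Sum.inr (Sum.inl ⟨n - 1, by omega⟩)


/- ## Auxiliary definitions for the witness execution -/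

namespace LossyOpt

/-- Progress of peripheral node `k` (1-indexed) at time `m`. -/
def pp (n m k : ℕ) : ℕ :=
  if n*n + k ≤ m then 2*k
  else min (2*k - 1)
    (2*(m/n) + (if 1 ≤ m % n then 1 else 0) + (if k ≤ m % n then 1 else 0))

lemma pp_le (n m k : ℕ) : pp n m k ≤ 2*k := by
  unfold pp; split
  · exact le_rfl
  · exact le_trans (Nat.min_le_left _ _) (by omega)

lemma pp_eq (n t j k : ℕ) (hn : 0 < n) (hj : j < n) :
    pp n (t*n+j) k =
      if n*n + k ≤ t*n + j then 2*k
      else min (2*k-1) (2*t + (if 1 ≤ j then 1 else 0) + (if k ≤ j then 1 else 0)) := by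
  have hd : (t*n+j)/n = t := by
    rw [Nat.mul_comm, Nat.mul_add_div hn, Nat.div_eq_of_lt hj]; omega
  have hm : (t*n+j)%n = j := by
    rw [Nat.mul_comm, Nat.mul_add_mod, Nat.mod_eq_of_lt hj]
  unfold pp; rw [hd, hm]

lemma pp_B (n s k : ℕ) (hn : 0 < n) (hk1 : 1 ≤ k) (hk2 : k ≤ n) (hs : s ≤ n) :
    pp n (n*n+s) k = if k ≤ s then 2*k else 2*k-1 := by
  unfold pp
  by_cases h : k ≤ s
  · rw [if_pos (by omega), if_pos h]
  · rw [if_neg (by omega), if_neg h]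
    have h2 : n ≤ (n*n+s)/n := (Nat.le_div_iff_mul_le hn).mpr (by omega)
    omega

lemma pp_step (n t j k : ℕ) (hn : 0 < n) (ht : t < n) (hj : j < n) (h1 : 1 ≤ j)
    (hk1 : 1 ≤ k) (hkn : k ≤ n) (hne : k ≠ j + 1 ∨ j ≤ t) :
    pp n (t*n+j+1) k = pp n (t*n+j) k := by
  have hd2 : (t+1)*n = t*n + n := by ring
  have hmul : (t+1)*n ≤ n*n := Nat.mul_le_mul_right n (by omega)
  rcases Nat.lt_or_ge (j+1) n with hj1 | hj1
  · rw [show t*n+j+1 = t*n+(j+1) by omega, pp_eq n _ _ _ hn hj1, pp_eq n _ _ _ hn hj]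
    split_ifs <;> omega
  · rw [show t*n+j+1 = (t+1)*n+0 by omega, pp_eq n _ _ _ hn hn, pp_eq n _ _ _ hn hj]
    split_ifs <;> omega

lemma pp_stepB (n s k : ℕ) (hn : 0 < n) (hs : s < n) (hk1 : 1 ≤ k) (hkn : k ≤ n)
    (hne : k ≠ s + 1) : pp n (n*n+s+1) k = pp n (n*n+s) k := by
  rw [show n*n+s+1 = n*n+(s+1) by omega, pp_B n _ _ hn hk1 hkn (by omega),
    pp_B n _ _ hn hk1 hkn (by omega)]
  split_ifs <;> omega

lemma pp_a1 (n t k : ℕ) (hn : 0 < n) (ht : t < n) (hk1 : 1 ≤ k) (hkn : k ≤ n) :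
    pp n (t*n) k = min (2*k-1) (2*t) ∧ pp n (t*n+1) k = min (2*k-1) (2*t+1) := by
  have hd2 : (t+1)*n = t*n + n := by ring
  have hmul : (t+1)*n ≤ n*n := Nat.mul_le_mul_right n (by omega)
  constructor
  · rw [show t*n = t*n+0 by omega, pp_eq n _ _ _ hn hn]
    split_ifs <;> omega
  · rcases Nat.lt_or_ge 1 n with h2 | h2
    · rw [pp_eq n t 1 k hn h2]
      split_ifs <;> omega
    · rw [show t*n+1 = (t+1)*n+0 by omega, pp_eq n _ _ _ hn hn]
      split_ifs <;> omega

lemma rcv_a (n : ℕ) (p q : ℕ) (hp : p < 2*n+1) (hq : q < 2*n+1)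
    (h : (p % 2 = 0 ∧ p < 2*n ∧ q = p+1) ∨ (¬(p % 2 = 0 ∧ p < 2*n) ∧ q = p)) :
    PnRcv n (Sum.inl ⟨p, hp⟩) none (Sum.inl ⟨q, hq⟩) := by
  rcases h with ⟨h1, h2, h3⟩ | ⟨h1, h2⟩
  · exact Or.inl ⟨h1, h2, by subst h3; rfl⟩
  · exact Or.inr ⟨by simpa using h1, by subst h2; rfl⟩

end LossyOpt

set_option maxHeartbeats 2000000 in
open LossyOpt in
/-- The witness execution: star topology with center `0`, `n*n + n` steps. -/
def theExec (n : ℕ) (hn : 0 < n) : LExec (PnProt n) (Fin (n+1)) (n*n+n) where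
  lab m v :=
    if (v : ℕ) = 0 then
      (if (m : ℕ) ≤ n*n then Sum.inl ⟨0, by omega⟩
       else Sum.inr (Sum.inl ⟨(m : ℕ) - n*n - 1, by have := m.isLt; omega⟩))
    else Sum.inl ⟨pp n (m : ℕ) (v : ℕ), by
      have h1 := pp_le n (m : ℕ) (v : ℕ); have := v.isLt; omega⟩
  E v w := v ≠ w ∧ (v = 0 ∨ w = 0)
  E_symm := by rintro v w ⟨h1, h2⟩; exact ⟨h1.symm, h2.symm⟩
  E_irrefl := by rintro v ⟨h1, _⟩; exact h1 rfl
  sender i :=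
    if n*n ≤ (i : ℕ) then ⟨(i : ℕ) - n*n + 1, by have := i.isLt; omega⟩
    else if (i : ℕ) % n = 0 then 0
    else if (i : ℕ)/n + 1 ≤ (i : ℕ) % n then
      ⟨(i : ℕ) % n + 1, by have := Nat.mod_lt (i : ℕ) hn; omega⟩
    else 0
  msg i :=
    if h : n*n ≤ (i : ℕ) then some ⟨(i : ℕ) - n*n, by have := i.isLt; omega⟩
    else if (i : ℕ) % n = 0 then none
    else if (i : ℕ)/n + 1 ≤ (i : ℕ) % n then
      some ⟨(i : ℕ)/n, (Nat.div_lt_iff_lt_mul hn).mpr (by omega)⟩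
    else none
  lost i := if n*n ≤ (i : ℕ) then false else if (i : ℕ) % n = 0 then false else true
  init := by
    intro v
    simp only [PnProt, Finset.mem_singleton]
    rcases Nat.eq_zero_or_pos (v : ℕ) with h | h
    · simp only [Fin.val_zero, h, if_pos, Nat.zero_le, zero_le]
      norm_num
    · have hv : ¬ ((v : ℕ) = 0) := by omega
      have h0 : pp n ((0 : Fin (n*n+n+1)) : ℕ) (v : ℕ) = 0 := by
        have : ((0 : Fin (n*n+n+1)) : ℕ) = 0 := rfl
        rw [this]; unfold pp
        rw [if_neg (by omega)]
        simp only [Nat.zero_div, Nat.zero_mod, if_neg (show ¬ (1:ℕ) ≤ 0 by omega),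
          if_neg (show ¬ (v:ℕ) ≤ 0 by omega)]
        simp only [show ¬ (1:ℕ) ≤ 0 by omega, show ¬ (v:ℕ) ≤ 0 by omega, if_false]
        omega
      simp only [hv, if_false, if_neg hv]
      exact congrArg Sum.inl (Fin.ext (by simpa using h0))
  step_br := by
    intro i
    have hil := i.isLt
    have hcs : ((i.castSucc : Fin (n*n+n+1)) : ℕ) = (i : ℕ) := rfl
    have hsc : ((i.succ : Fin (n*n+n+1)) : ℕ) = (i : ℕ) + 1 := rfl
    by_cases hB : n*n ≤ (i : ℕ)
    · -- phase B : real broadcast of b_{s+1} by node s+1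
      simp only [if_pos hB, dif_pos hB, hcs, hsc]
      have e1 : pp n (i : ℕ) ((i : ℕ) - n*n + 1) = 2*((i : ℕ) - n*n) + 1 := by
        rw [show (i : ℕ) = n*n + ((i : ℕ) - n*n) by omega,
          pp_B n _ _ hn (by omega) (by omega) (by omega)]
        rw [if_neg (by omega)]; omega
      have e2 : pp n ((i : ℕ) + 1) ((i : ℕ) - n*n + 1) = 2*((i : ℕ) - n*n) + 2 := by
        rw [show (i : ℕ) + 1 = n*n + ((i : ℕ) - n*n + 1) by omega,
          pp_B n _ _ hn (by omega) (by omega) (by omega)]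
        rw [if_pos (by omega)]; omega
      simp only [show ¬ (((⟨(i : ℕ) - n*n + 1, by omega⟩ : Fin (n+1)) : ℕ) = 0) from by simp,
        if_neg]
      simp only [if_false, e1, e2, PnProt, PnBr]
      exact ⟨by simp, by omega, by simp [Fin.ext_iff]⟩
    · push_neg at hB
      have hj : (i : ℕ) % n < n := Nat.mod_lt _ hn
      have hdm := Nat.div_add_mod (i : ℕ) n
      by_cases h0 : (i : ℕ) % n = 0
      · -- real broadcast of a by the center
        simp only [if_neg (by omega : ¬ n*n ≤ (i : ℕ)), dif_neg (by omega : ¬ n*n ≤ (i : ℕ)),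
          if_pos h0, hcs, hsc]
        have c1 : (i : ℕ) ≤ n*n := by omega
        have c2 : (i : ℕ) + 1 ≤ n*n := by omega
        simp [PnProt, PnBr, c1, c2]
      · by_cases hA : (i : ℕ)/n + 1 ≤ (i : ℕ) % n
        · -- lost broadcast of b_{t+1} by node j+1
          simp only [if_neg (by omega : ¬ n*n ≤ (i : ℕ)), dif_neg (by omega : ¬ n*n ≤ (i : ℕ)),
            if_neg h0, if_pos hA, hcs, hsc]
          set t := (i : ℕ)/n with hts
          set j := (i : ℕ)%n with hjs
          have ht : t < n := (Nat.div_lt_iff_lt_mul hn).mpr (by omega)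
          have hdm2 : n * t + j = (i : ℕ) := Nat.div_add_mod _ _
          have hi : (i : ℕ) = t*n + j := by rw [Nat.mul_comm] at hdm2; omega
          have e1 : pp n (i : ℕ) (j+1) = 2*t+1 := by
            rw [hi, pp_eq n _ _ _ hn hj, if_neg (by omega), if_pos (by omega),
              if_neg (by omega)]
            omega
          have e2 : pp n ((i : ℕ)+1) (j+1) = 2*t+2 := by
            rcases Nat.lt_or_ge (j+1) n with hj1 | hj1
            · rw [show (i : ℕ)+1 = t*n + (j+1) by omega, pp_eq n _ _ _ hn hj1,
                if_neg (by omega), if_pos (by omega), if_pos (by omega)]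
              omega
            · have hd2 : (t+1)*n = t*n + n := by ring
              have hmul : (t+1)*n ≤ n*n := Nat.mul_le_mul_right n (by omega)
              rw [show (i : ℕ)+1 = (t+1)*n + 0 by omega, pp_eq n _ _ _ hn hn,
                if_neg (by omega), if_neg (by omega), if_neg (by omega)]
              omega
          simp only [show ¬ (((⟨(i : ℕ)%n+1, by omega⟩ : Fin (n+1)) : ℕ) = 0) from by simp, if_neg]
          simp only [if_false, ← hjs, e1, e2, PnProt, PnBr]
          exact ⟨by simp [hts], by omega, by simp [Fin.ext_iff]⟩
        · -- lost broadcast of a by the center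
          simp only [if_neg (by omega : ¬ n*n ≤ (i : ℕ)), dif_neg (by omega : ¬ n*n ≤ (i : ℕ)),
            if_neg h0, if_neg hA, hcs, hsc]
          have c1 : (i : ℕ) ≤ n*n := by omega
          have c2 : (i : ℕ) + 1 ≤ n*n := by omega
          simp [PnProt, PnBr, c1, c2]
  step_lost := by
    intro i hl v hv
    have hil := i.isLt
    have hcs : ((i.castSucc : Fin (n*n+n+1)) : ℕ) = (i : ℕ) := rfl
    have hsc : ((i.succ : Fin (n*n+n+1)) : ℕ) = (i : ℕ) + 1 := rfl
    by_cases hB : n*n ≤ (i : ℕ)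
    · simp [hB] at hl
    · have hj : (i : ℕ) % n < n := Nat.mod_lt _ hn
      by_cases h0 : (i : ℕ) % n = 0
      · simp [hB, h0] at hl
      · simp only [hcs, hsc]
        by_cases hv0 : (v : ℕ) = 0
        · have c1 : (i : ℕ) ≤ n*n := by omega
          have c2 : (i : ℕ) + 1 ≤ n*n := by omega
          simp [hv0, c1, c2]
        · simp only [if_neg hv0]
          set t := (i : ℕ)/n with hts
          set j := (i : ℕ)%n with hjs
          have ht : t < n := (Nat.div_lt_iff_lt_mul hn).mpr (by omega)
          have hdm2 : n * t + j = (i : ℕ) := Nat.div_add_mod _ _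
          have hi : (i : ℕ) = t*n + j := by rw [Nat.mul_comm] at hdm2; omega
          have hne : (v : ℕ) ≠ j + 1 ∨ j ≤ t := by
            by_cases hA : t + 1 ≤ j
            · left
              intro hvj
              simp only [if_neg hB, if_neg (show ¬ (i : ℕ) % n = 0 from h0),
                if_pos (show t + 1 ≤ (i : ℕ) % n from hA)] at hv
              exact hv (Fin.ext hvj)
            · right; omega
          have hstep := pp_step n t j (v : ℕ) hn ht hj (by omega) (by omega)
            (by have := v.isLt; omega) hne
          exact congrArg Sum.inl (Fin.ext (by
            simp only []
            rw [show (i : ℕ) + 1 = t*n+j+1 by omega, hi]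
            exact hstep))
  step_real := by
    intro i hl v hv
    have hil := i.isLt
    have hcs : ((i.castSucc : Fin (n*n+n+1)) : ℕ) = (i : ℕ) := rfl
    have hsc : ((i.succ : Fin (n*n+n+1)) : ℕ) = (i : ℕ) + 1 := rfl
    by_cases hB : n*n ≤ (i : ℕ)
    · -- phase B : center receives b_{s+1}; other peripherals not adjacent
      simp only [if_pos hB, dif_pos hB, hcs, hsc] at hv ⊢
      have hs : (i : ℕ) - n*n < n := by omega
      by_cases hv0 : (v : ℕ) = 0
      · refine ⟨fun _ => ?_, fun hnE => absurd ⟨Ne.symm hv, Or.inr (Fin.ext hv0)⟩ hnE⟩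
        simp only [if_pos hv0]
        rcases Nat.eq_zero_or_pos ((i : ℕ) - n*n) with hz | hz
        · rw [if_pos (show (i : ℕ) ≤ n*n by omega),
            if_neg (show ¬ (i : ℕ) + 1 ≤ n*n by omega)]
          refine Or.inr (Or.inl ⟨rfl, ?_, ?_⟩)
          · simp only [Fin.val_mk]; omega
          · simp only [Fin.val_succ, Sum.inr.injEq, Sum.inl.injEq, Fin.mk.injEq]; omega
        · rw [if_neg (show ¬ (i : ℕ) ≤ n*n by omega),
            if_neg (show ¬ (i : ℕ) + 1 ≤ n*n by omega)]
          refine Or.inl ⟨?_, ?_, ?_⟩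
          · simp only [Fin.val_mk]; omega
          · simp only [Fin.val_mk]; omega
          · simp only [Fin.val_succ, Fin.val_mk, Sum.inr.injEq, Sum.inl.injEq,
              Fin.mk.injEq]; omega
      · refine ⟨fun hE => ?_, fun _ => ?_⟩
        · exfalso
          rcases hE.2 with h | h
          · have := congrArg Fin.val h; simp at this
          · exact hv0 (by rw [h]; rfl)
        · simp only [if_neg hv0]
          refine congrArg Sum.inl (Fin.ext ?_)
          simp only [Fin.val_mk]
          have hkne : (v : ℕ) ≠ ((i : ℕ) - n*n) + 1 := by
            intro hvj
            exact hv (Fin.ext (by simp only [Fin.val_mk]; exact hvj))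
          obtain ⟨s, hsv⟩ : ∃ s, (i : ℕ) = n*n + s := ⟨(i : ℕ) - n*n, by omega⟩
          rw [hsv]
          exact pp_stepB n s _ hn (by omega) (by omega) (by have := v.isLt; omega)
            (by omega)
    · have hj : (i : ℕ) % n < n := Nat.mod_lt _ hn
      by_cases h0 : (i : ℕ) % n = 0
      · -- center really broadcasts a
        simp only [if_neg hB, dif_neg hB, if_pos h0, hcs, hsc] at hv ⊢
        refine ⟨fun _ => ?_, fun hnE => absurd ⟨Ne.symm hv, Or.inl (by trivial)⟩ hnE⟩
        have hv0 : ¬ (v : ℕ) = 0 := fun h => hv (Fin.ext h)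
        simp only [if_neg hv0]
        set t := (i : ℕ)/n with hts
        have ht : t < n := (Nat.div_lt_iff_lt_mul hn).mpr (by omega)
        have hdm2 : n * t + (i : ℕ) % n = (i : ℕ) := Nat.div_add_mod _ _
        have hi : (i : ℕ) = t*n := by rw [Nat.mul_comm] at hdm2; omega
        have hkv := v.isLt
        obtain ⟨e1, e2⟩ := pp_a1 n t (v : ℕ) hn ht (by omega) (by omega)
        have e1' : pp n (i : ℕ) (v : ℕ) = min (2*(v : ℕ)-1) (2*t) := by rw [hi]; exact e1
        have e2' : pp n ((i : ℕ)+1) (v : ℕ) = min (2*(v : ℕ)-1) (2*t+1) := by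
          rw [show (i : ℕ)+1 = t*n+1 by omega]; exact e2
        show PnRcv n
          (Sum.inl ⟨pp n (i : ℕ) (v : ℕ), by
            have := pp_le n (i : ℕ) (v : ℕ); omega⟩) none
          (Sum.inl ⟨pp n ((i : ℕ)+1) (v : ℕ), by
            have := pp_le n ((i : ℕ)+1) (v : ℕ); omega⟩)
        exact rcv_a n _ _ _ _ (by rw [e1', e2']; omega)
      · simp [hB, h0] at hl

/-- **Optimality of the lossy lower bound.** For every `n ≥ 1` there is a lossy
execution of `P_n` covering `{☺}` with exactly `n + 1` nodes, whose static
communication topology is the star in which one designated node `cn` is connected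
exactly to each of the other `n` nodes. -/
theorem lossy_cover_with_star_topology (n : ℕ) (hn : 1 ≤ n) :
    ∃ (r : ℕ) (ρ : LExec (PnProt n) (Fin (n + 1)) r) (cn : Fin (n + 1)),
      (∀ v w, ρ.E v w ↔ (v ≠ w ∧ (v = cn ∨ w = cn))) ∧
      ρ.Covers {PnSmiley n hn} := by
  refine ⟨n*n+n, theExec n hn, 0, fun v w => Iff.rfl, 0, ?_⟩
  show (theExec n hn).lab (Fin.last (n*n+n)) 0 ∈ ({PnSmiley n hn} : Set (PnQ n))
  have h1 : ((Fin.last (n*n+n) : Fin (n*n+n+1)) : ℕ) = n*n+n := rfl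
  simp only [theExec, Set.mem_singleton_iff, PnSmiley, h1]
  rw [if_pos (show ((0 : Fin (n+1)) : ℕ) = 0 from rfl), if_neg (by omega)]
  exact congrArg (fun x => Sum.inr (Sum.inl x)) (Fin.ext (by simp only [Fin.val_mk]; omega))
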